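/- Let β ∈ (0,1) and let w be the facility location profile output by the (1,β)-Quantile mechanism on an instance. Then for every facility location profile o of that instance, AoM(w) ≤ max{1 + 2(1 − β)/β, 1 + 2/(1 − β)} · AoM(o). In particular, the distortion of the (1,β)-Quantile mechanism under the Average-of-Max cost is at most max{1 + 2(1 − β)/β, 1 + 2/(1 − β)}. -/

import Mathlib

noncomputable section

/-- Max-variant individual cost of an agent at `x` under facility profile `w`. -/
def fcost (x : ℝ) (w : ℝ × ℝ) : ℝ := max |x - w.1| |x - w.2|

/-- `w` is a facility location profile for the candidate multiset `A`:
its first slot is an element of `A` and its second slot is an element of `A`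
with one copy of the first slot removed. -/
def IsProfile (A : Multiset ℝ) (w : ℝ × ℝ) : Prop :=
  w.1 ∈ A ∧ w.2 ∈ A.erase w.1

/-- Canonical closest element of the multiset `A` to `p` (ties broken to the smaller). -/
def closest (A : Multiset ℝ) (p : ℝ) : ℝ :=
  if h : A.toFinset.Nonempty then
    (A.toFinset.filter fun a => ∀ b ∈ A.toFinset, |p - a| ≤ |p - b|).min'
      (by
        obtain ⟨a, ha, hmin⟩ := A.toFinset.exists_min_image (fun a => |p - a|) h
        exact ⟨a, Finset.mem_filter.mpr ⟨ha, hmin⟩⟩)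
  else 0

/-- The `⌈γ · |S|⌉`-th leftmost element of the multiset `S` (the leftmost when `γ = 0`). -/
def qSel (S : Multiset ℝ) (γ : ℝ) : ℝ :=
  (S.sort (· ≤ ·)).getD (⌈γ * (Multiset.card S : ℝ)⌉.toNat - 1) 0

/-- Multiset of locations of the agents of group `d`. -/
def groupLocs {n k : ℕ} (group : Fin n → Fin k) (x : Fin n → ℝ) (d : Fin k) : Multiset ℝ :=
  ((Finset.univ.filter fun i => group i = d).val).map x

/-- The (α,β)-Quantile mechanism: for each group `d` the representatives are the two
candidate locations closest to the ⌈α·n_d⌉-th leftmost agent of the group, and the two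
facilities are chosen among the representatives by the ⌈β·k⌉-th leftmost rule. -/
def quantileMech (A : Multiset ℝ) (α β : ℝ) {n k : ℕ}
    (group : Fin n → Fin k) (x : Fin n → ℝ) : ℝ × ℝ :=
  let y1 : Fin k → ℝ := fun d => closest A (qSel (groupLocs group x d) α)
  let y2 : Fin k → ℝ := fun d => closest (A.erase (y1 d)) (qSel (groupLocs group x d) α)
  let w1 : ℝ := qSel (Finset.univ.val.map y1) β
  let w2 : ℝ := qSel (Finset.univ.val.map fun d => if y1 d = w1 then y2 d else y1 d) β
  (w1, w2)

/-- Average-of-Max cost. -/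
def AoM {n k : ℕ} (group : Fin n → Fin k) (x : Fin n → ℝ) (w : ℝ × ℝ) : ℝ :=
  (1 / (k : ℝ)) * ∑ d : Fin k, ⨆ i : {i : Fin n // group i = d}, fcost (x i.1) w

lemma closest_spec {A : Multiset ℝ} (hA : A ≠ 0) (p : ℝ) :
    closest A p ∈ A ∧ ∀ b ∈ A, |p - closest A p| ≤ |p - b| := by
  obtain ⟨a, ha⟩ := Multiset.exists_mem_of_ne_zero hA
  have h : A.toFinset.Nonempty := ⟨a, Multiset.mem_toFinset.mpr ha⟩
  rw [closest, dif_pos h]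
  have hmem := Finset.min'_mem (A.toFinset.filter fun a => ∀ b ∈ A.toFinset, |p - a| ≤ |p - b|)
    (by
      obtain ⟨a, ha, hmin⟩ := A.toFinset.exists_min_image (fun a => |p - a|) h
      exact ⟨a, Finset.mem_filter.mpr ⟨ha, hmin⟩⟩)
  rw [Finset.mem_filter] at hmem
  exact ⟨Multiset.mem_toFinset.mp hmem.1, fun b hb => hmem.2 b (Multiset.mem_toFinset.mpr hb)⟩

lemma qSel_spec (S : Multiset ℝ) (hS : S ≠ 0) (γ : ℝ) (hγ0 : 0 < γ) (hγ1 : γ ≤ 1) :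
    qSel S γ ∈ S ∧ (⌈γ * (Multiset.card S : ℝ)⌉.toNat) ≤ Multiset.countP (fun a => a ≤ qSel S γ) S ∧
      Multiset.card S + 1 - ⌈γ * (Multiset.card S : ℝ)⌉.toNat ≤
        Multiset.countP (fun a => qSel S γ ≤ a) S := by
  classical
  set L := S.sort (· ≤ ·) with hL
  have hLS : (L : Multiset ℝ) = S := S.sort_eq _
  have hlen : L.length = Multiset.card S := S.length_sort _
  have hm : 0 < Multiset.card S := Multiset.card_pos.mpr hS
  set m := Multiset.card S with hmdef
  set j := (⌈γ * (m:ℝ)⌉).toNat with hj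
  have hcpos : (0:ℤ) < ⌈γ * (m:ℝ)⌉ := Int.ceil_pos.mpr (by positivity)
  have hj1 : 1 ≤ j := by
    rw [hj]
    omega
  have hjm : j ≤ m := by
    have h1 : ⌈γ * (m:ℝ)⌉ ≤ (m:ℤ) := by
      apply Int.ceil_le.mpr
      push_cast
      nlinarith [hm]
    rw [hj]
    omega
  have hidx : j - 1 < L.length := by omega
  have hw : qSel S γ = L[j-1] := by
    rw [qSel]
    exact List.getD_eq_getElem L 0 hidx
  have hsort : L.Pairwise (· ≤ ·) := S.pairwise_sort _
  have hpair := List.pairwise_iff_getElem.mp hsort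
  refine ⟨?_, ?_, ?_⟩
  · rw [hw, ← hLS]
    exact Multiset.mem_coe.mpr (List.getElem_mem hidx)
  · -- lower bound on count of ≤
    have htake : ∀ a ∈ L.take j, a ≤ L[j-1] := by
      intro a ha
      obtain ⟨i, hi, hEq⟩ := List.getElem_of_mem ha
      have hij : i < j := lt_of_lt_of_le hi (by simp [List.length_take])
      have hiL : i < L.length := by omega
      rw [List.getElem_take] at hEq
      rcases eq_or_lt_of_le (by omega : i ≤ j - 1) with h | h
      · subst h; rw [hEq]
      · rw [← hEq]
        exact hpair i (j-1) hiL hidx h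
    have hle : ((L.take j : List ℝ) : Multiset ℝ) ≤ S := by
      rw [← hLS]
      exact (L.take_sublist j).subperm
    have h1 : Multiset.countP (fun a => a ≤ qSel S γ) ((L.take j : List ℝ) : Multiset ℝ) = j := by
      rw [Multiset.countP_eq_card_filter, Multiset.filter_eq_self.mpr, Multiset.coe_card,
        List.length_take]
      · omega
      · intro a ha
        rw [hw]
        exact htake a (by exact_mod_cast ha)
    calc j = Multiset.countP (fun a => a ≤ qSel S γ) ((L.take j : List ℝ) : Multiset ℝ) := h1.symm
      _ ≤ _ := Multiset.countP_le_of_le _ hle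
  · -- lower bound on count of ≥
    have hdrop : ∀ a ∈ L.drop (j-1), qSel S γ ≤ a := by
      intro a ha
      obtain ⟨i, hi, hEq⟩ := List.getElem_of_mem ha
      rw [List.getElem_drop] at hEq
      rw [hw, ← hEq]
      rcases Nat.eq_zero_or_pos i with h | h
      · subst h; simp
      · exact hpair (j-1) (j-1+i) hidx (by simp [List.length_drop] at hi; omega) (by omega)
    have hle : ((L.drop (j-1) : List ℝ) : Multiset ℝ) ≤ S := by
      rw [← hLS]
      exact (L.drop_sublist (j-1)).subperm
    have h1 : Multiset.countP (fun a => qSel S γ ≤ a) ((L.drop (j-1) : List ℝ) : Multiset ℝ)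
        = L.length - (j-1) := by
      rw [Multiset.countP_eq_card_filter, Multiset.filter_eq_self.mpr, Multiset.coe_card,
        List.length_drop]
      intro a ha
      exact hdrop a (by exact_mod_cast ha)
    have h2 := Multiset.countP_le_of_le (fun a => qSel S γ ≤ a) hle
    rw [h1] at h2
    omega

lemma qSel_one (S : Multiset ℝ) (hS : S ≠ 0) :
    qSel S 1 ∈ S ∧ ∀ a ∈ S, a ≤ qSel S 1 := by
  obtain ⟨h1, h2, _⟩ := qSel_spec S hS 1 one_pos le_rfl
  refine ⟨h1, ?_⟩
  rw [one_mul, Int.ceil_natCast, Int.toNat_natCast] at h2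
  have heq := le_antisymm (Multiset.countP_le_card _ _) h2
  rw [Multiset.countP_eq_card] at heq
  exact heq

lemma qSel_filter (k : ℕ) (hk : 0 < k) (v : Fin k → ℝ) (γ : ℝ) (hγ0 : 0 < γ) (hγ1 : γ ≤ 1) :
    (⌈γ * (k:ℝ)⌉.toNat ≤ (Finset.univ.filter fun d => v d ≤ qSel (Finset.univ.val.map v) γ).card) ∧
    (k + 1 - ⌈γ * (k:ℝ)⌉.toNat ≤
      (Finset.univ.filter fun d => qSel (Finset.univ.val.map v) γ ≤ v d).card) := by
  classical
  have hcard : Multiset.card (Finset.univ.val.map v) = k := by simp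
  have hne : (Finset.univ.val.map v) ≠ 0 := by
    rw [← Multiset.card_pos, hcard]; exact hk
  obtain ⟨_, h1, h2⟩ := qSel_spec _ hne γ hγ0 hγ1
  rw [hcard] at h1 h2
  constructor
  · refine h1.trans (le_of_eq ?_)
    rw [Multiset.countP_map]
    rfl
  · refine h2.trans (le_of_eq ?_)
    rw [Multiset.countP_map]
    rfl

lemma arith_core (β ell rr T : ℝ) (hβ0 : 0 < β) (hβ1 : β < 1) (hl : 0 ≤ ell) (hr : 0 ≤ rr)
    (hT : 0 ≤ T) (hcon : β * ell + (1 - β) * rr ≤ 2 * T) :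
    β * rr + (1 - β) * max ell rr ≤ max (2 * (1 - β) / β) (2 / (1 - β)) * T := by
  set C := max (2 * (1 - β) / β) (2 / (1 - β)) with hC
  have hb1 : (0:ℝ) < 1 - β := by linarith
  have h2a : 2 * (1 - β) ≤ C * β := by
    rw [← div_le_iff₀ hβ0]
    exact le_max_left _ _
  have h2b : 2 ≤ C * (1 - β) := by
    rw [← div_le_iff₀ hb1]
    exact le_max_right _ _
  have hC0 : 0 ≤ C := by nlinarith
  rcases le_total rr ell with h | h
  · rw [max_eq_left h]
    nlinarith [mul_le_mul_of_nonneg_right h2a hl, mul_le_mul_of_nonneg_right h2b hr,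
      mul_le_mul_of_nonneg_left hcon hC0, mul_nonneg (mul_nonneg hC0 (sq_nonneg (1 - β))) hr,
      sq_nonneg (1 - β), mul_nonneg hC0 (mul_nonneg (sq_nonneg (1-β)) hr)]
  · rw [max_eq_right h]
    have h1 : (1 - β) * rr ≤ 2 * T := by nlinarith
    nlinarith [mul_le_mul_of_nonneg_right h2b hT]

set_option maxHeartbeats 2000000 in
/-- For the Average-of-Max cost, the distortion of the (1,β)-Quantile mechanism is at
most max {1 + 2(1-β)/β, 1 + 2/(1-β)}. -/
theorem quantileMech_AoM_distortion
    (β : ℝ) (hβ : β ∈ Set.Ioo (0 : ℝ) 1)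
    (A : Multiset ℝ) (hA : 2 ≤ Multiset.card A)
    (n k : ℕ) (hn : 0 < n) (hk : 0 < k)
    (group : Fin n → Fin k) (hgrp : ∀ d : Fin k, ∃ i : Fin n, group i = d)
    (x : Fin n → ℝ) (o : ℝ × ℝ) (ho : IsProfile A o) :
    AoM group x (quantileMech A 1 β group x) ≤
      max (1 + 2 * (1 - β) / β) (1 + 2 / (1 - β)) * AoM group x o := by
  classical
  obtain ⟨hβ0, hβ1⟩ := hβ
  have hkR : (0:ℝ) < (k:ℝ) := by exact_mod_cast hk
  -- candidate set facts
  have hA0 : A ≠ 0 := by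
    intro h; rw [h] at hA; simp at hA
  have hAe : ∀ y ∈ A, A.erase y ≠ 0 := by
    intro y hy h
    have h2 := Multiset.card_erase_of_mem hy
    rw [h] at h2
    simp at h2
    omega
  -- groups are nonempty
  have hlocs_ne : ∀ d : Fin k, groupLocs group x d ≠ 0 := by
    intro d h
    obtain ⟨i, hi⟩ := hgrp d
    have hmem : x i ∈ groupLocs group x d :=
      Multiset.mem_map_of_mem x
        (Finset.mem_val.mpr (Finset.mem_filter.mpr ⟨Finset.mem_univ i, hi⟩))
    rw [h] at hmem
    simp at hmem
  -- the rightmost agent of each group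
  set r : Fin k → ℝ := fun d => qSel (groupLocs group x d) 1 with hrdef
  have hrmem : ∀ d, ∃ i, group i = d ∧ x i = r d := by
    intro d
    have h1 := (qSel_one _ (hlocs_ne d)).1
    rw [groupLocs] at h1
    obtain ⟨i, hi, hxi⟩ := Multiset.mem_map.mp h1
    exact ⟨i, (Finset.mem_filter.mp (Finset.mem_val.mp hi)).2, hxi⟩
  have hrmax : ∀ d i, group i = d → x i ≤ r d := by
    intro d i hi
    exact (qSel_one _ (hlocs_ne d)).2 _
      (Multiset.mem_map_of_mem x
        (Finset.mem_val.mpr (Finset.mem_filter.mpr ⟨Finset.mem_univ i, hi⟩)))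
  -- the mechanism output
  set y1 : Fin k → ℝ := fun d => closest A (qSel (groupLocs group x d) 1) with hy1def
  set y2 : Fin k → ℝ := fun d => closest (A.erase (y1 d)) (qSel (groupLocs group x d) 1)
    with hy2def
  set w1 : ℝ := qSel (Finset.univ.val.map y1) β with hw1def
  set v2 : Fin k → ℝ := fun d => if y1 d = w1 then y2 d else y1 d with hv2def
  set w2 : ℝ := qSel (Finset.univ.val.map v2) β with hw2def
  have hmech : quantileMech A 1 β group x = (w1, w2) := rfl
  rw [hmech]
  simp only [AoM]
  -- per-group optimal quantities
  set g : Fin k → ℝ := fun d => ⨆ i : {i : Fin n // group i = d}, fcost (x i.1) o with hgdef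
  set c : Fin k → ℝ := fun d => fcost (r d) o with hcdef
  have hne : ∀ d : Fin k, Nonempty {i : Fin n // group i = d} := by
    intro d; obtain ⟨i, hi⟩ := hgrp d; exact ⟨⟨i, hi⟩⟩
  have hfo : ∀ d i, group i = d → fcost (x i) o ≤ g d := by
    intro d i hi
    exact le_ciSup (f := fun i : {i : Fin n // group i = d} => fcost (x i.1) o)
      (Set.Finite.bddAbove (Set.finite_range _)) ⟨i, hi⟩
  have hcg : ∀ d, c d ≤ g d := by
    intro d
    obtain ⟨i, hi, hxi⟩ := hrmem d
    have : c d = fcost (x i) o := by rw [hcdef]; simp only; rw [hxi]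
    rw [this]
    exact hfo d i hi
  have hc0 : ∀ d, 0 ≤ c d := fun d => le_trans (abs_nonneg _) (le_max_left _ _)
  have hg0 : ∀ d, 0 ≤ g d := fun d => le_trans (hc0 d) (hcg d)
  have hco1 : ∀ d, |r d - o.1| ≤ c d := fun d => le_max_left _ _
  have hco2 : ∀ d, |r d - o.2| ≤ c d := fun d => le_max_right _ _
  -- representatives are close to the rightmost agent
  have h_y1 : ∀ d, |r d - y1 d| ≤ c d := by
    intro d
    exact le_trans ((closest_spec hA0 (qSel (groupLocs group x d) 1)).2 o.1 ho.1) (hco1 d)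
  have hy1A : ∀ d, y1 d ∈ A := fun d => (closest_spec hA0 (qSel (groupLocs group x d) 1)).1
  have h_y2 : ∀ d, |r d - y2 d| ≤ c d := by
    intro d
    have hne2 : A.erase (y1 d) ≠ 0 := hAe (y1 d) (hy1A d)
    by_cases h : o.1 = y1 d
    · refine le_trans ((closest_spec hne2 (qSel (groupLocs group x d) 1)).2 o.2 ?_) (hco2 d)
      rw [← h]
      exact ho.2
    · refine le_trans ((closest_spec hne2 (qSel (groupLocs group x d) 1)).2 o.1 ?_) (hco1 d)
      exact (Multiset.mem_erase_of_ne h).mpr ho.1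
  have h_v2 : ∀ d, |r d - v2 d| ≤ c d := by
    intro d
    rw [hv2def]
    simp only
    split
    · exact h_y2 d
    · exact h_y1 d
  -- optimal facility interval
  set oL : ℝ := min o.1 o.2 with hoLdef
  set oR : ℝ := max o.1 o.2 with hoRdef
  have hoLR : oL ≤ oR := min_le_max
  have h_roL : ∀ d, |r d - oL| ≤ c d := by
    intro d
    rcases min_choice o.1 o.2 with h | h <;> rw [hoLdef, h]
    · exact hco1 d
    · exact hco2 d
  have h_roR : ∀ d, |r d - oR| ≤ c d := by
    intro d
    rcases max_choice o.1 o.2 with h | h <;> rw [hoRdef, h]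
    · exact hco1 d
    · exact hco2 d
  have h_xoL : ∀ d i, group i = d → |x i - oL| ≤ g d := by
    intro d i hi
    rcases min_choice o.1 o.2 with h | h <;> rw [hoLdef, h]
    · exact le_trans (le_max_left _ _) (hfo d i hi)
    · exact le_trans (le_max_right _ _) (hfo d i hi)
  have h_xoR : ∀ d i, group i = d → |x i - oR| ≤ g d := by
    intro d i hi
    rcases max_choice o.1 o.2 with h | h <;> rw [hoRdef, h]
    · exact le_trans (le_max_left _ _) (hfo d i hi)
    · exact le_trans (le_max_right _ _) (hfo d i hi)
  -- facility interval and deviations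
  set fL : ℝ := min w1 w2 with hfLdef
  set fR : ℝ := max w1 w2 with hfRdef
  set ell : ℝ := max (oL - fL) 0 with helldef
  set rr : ℝ := max (fR - oR) 0 with hrrdef
  have hell0 : 0 ≤ ell := le_max_right _ _
  have hrr0 : 0 ≤ rr := le_max_right _ _
  have hoLfL : oL - fL ≤ ell := le_max_left _ _
  have hfRoR : fR - oR ≤ rr := le_max_left _ _
  -- quantile index facts
  set j : ℕ := (⌈β * (k:ℝ)⌉).toNat with hjdef
  have hcpos : (0:ℤ) < ⌈β * (k:ℝ)⌉ := Int.ceil_pos.mpr (by positivity)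
  have hjcast : (j:ℝ) = (⌈β * (k:ℝ)⌉ : ℝ) := by
    rw [hjdef]
    exact_mod_cast Int.toNat_of_nonneg hcpos.le
  have hjge : β * k ≤ (j:ℝ) := by rw [hjcast]; exact Int.le_ceil _
  have hjlt : (j:ℝ) < β * k + 1 := by rw [hjcast]; exact Int.ceil_lt_add_one _
  have hjk : j ≤ k := by
    have h1 : ⌈β * (k:ℝ)⌉ ≤ (k:ℤ) := by
      apply Int.ceil_le.mpr
      push_cast
      nlinarith
    rw [hjdef]; omega
  -- the quantile sets
  have hSex : ∃ S : Finset (Fin k), j ≤ S.card ∧ ∀ d ∈ S, ∃ u, |r d - u| ≤ c d ∧ u ≤ fL := by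
    rcases le_total w1 w2 with h | h
    · refine ⟨Finset.univ.filter fun d => y1 d ≤ w1,
        (qSel_filter k hk y1 β hβ0 hβ1.le).1, fun d hd => ⟨y1 d, h_y1 d, ?_⟩⟩
      rw [hfLdef, min_eq_left h]
      exact (Finset.mem_filter.mp hd).2
    · refine ⟨Finset.univ.filter fun d => v2 d ≤ w2,
        (qSel_filter k hk v2 β hβ0 hβ1.le).1, fun d hd => ⟨v2 d, h_v2 d, ?_⟩⟩
      rw [hfLdef, min_eq_right h]
      exact (Finset.mem_filter.mp hd).2
  have hRex : ∃ R : Finset (Fin k), k + 1 - j ≤ R.card ∧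
      ∀ d ∈ R, ∃ u, |r d - u| ≤ c d ∧ fR ≤ u := by
    rcases le_total w1 w2 with h | h
    · refine ⟨Finset.univ.filter fun d => w2 ≤ v2 d,
        (qSel_filter k hk v2 β hβ0 hβ1.le).2, fun d hd => ⟨v2 d, h_v2 d, ?_⟩⟩
      rw [hfRdef, max_eq_right h]
      exact (Finset.mem_filter.mp hd).2
    · refine ⟨Finset.univ.filter fun d => w1 ≤ y1 d,
        (qSel_filter k hk y1 β hβ0 hβ1.le).2, fun d hd => ⟨y1 d, h_y1 d, ?_⟩⟩
      rw [hfRdef, max_eq_left h]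
      exact (Finset.mem_filter.mp hd).2
  obtain ⟨S, hScard, hSprop⟩ := hSex
  obtain ⟨R, hRcard, hRprop⟩ := hRex
  -- the counting inequality
  have hstar : (S.card : ℝ) * ell + (R.card : ℝ) * rr ≤ 2 * ∑ d : Fin k, c d := by
    have key : ∀ d : Fin k, (if d ∈ S then ell else 0) + (if d ∈ R then rr else 0) ≤ 2 * c d := by
      intro d
      have ha3 := abs_le.mp (h_roL d)
      have ha4 := abs_le.mp (h_roR d)
      by_cases hdS : d ∈ S <;> by_cases hdR : d ∈ R <;> simp only [hdS, hdR, if_true, if_false]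
      · obtain ⟨u1, hu1c, hu1⟩ := hSprop d hdS
        obtain ⟨u2, hu2c, hu2⟩ := hRprop d hdR
        have ha1 := abs_le.mp hu1c
        have ha2 := abs_le.mp hu2c
        rcases max_cases (oL - fL) (0:ℝ) with ⟨h1, _⟩ | ⟨h1, _⟩ <;>
          rcases max_cases (fR - oR) (0:ℝ) with ⟨h2, _⟩ | ⟨h2, _⟩ <;>
          rw [helldef, hrrdef, h1, h2] <;> linarith [hc0 d]
      · obtain ⟨u1, hu1c, hu1⟩ := hSprop d hdS
        have ha1 := abs_le.mp hu1c
        rcases max_cases (oL - fL) (0:ℝ) with ⟨h1, _⟩ | ⟨h1, _⟩ <;>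
          rw [helldef, h1] <;> linarith [hc0 d]
      · obtain ⟨u2, hu2c, hu2⟩ := hRprop d hdR
        have ha2 := abs_le.mp hu2c
        rcases max_cases (fR - oR) (0:ℝ) with ⟨h2, _⟩ | ⟨h2, _⟩ <;>
          rw [hrrdef, h2] <;> linarith [hc0 d]
      · linarith [hc0 d]
    have hsum := Finset.sum_le_sum (fun d (_ : d ∈ Finset.univ) => key d)
    rw [Finset.sum_add_distrib, Finset.sum_ite_mem, Finset.sum_ite_mem, Finset.univ_inter,
      Finset.univ_inter, Finset.sum_const, Finset.sum_const, ← Finset.mul_sum] at hsum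
    simpa [nsmul_eq_mul] using hsum
  -- per-agent cost bounds
  have hw1LR : fL ≤ w1 ∧ w1 ≤ fR := ⟨min_le_left _ _, le_max_left _ _⟩
  have hw2LR : fL ≤ w2 ∧ w2 ≤ fR := ⟨min_le_right _ _, le_max_right _ _⟩
  have hgen : ∀ (f : ℝ), fL ≤ f → f ≤ fR → ∀ d i, group i = d →
      |x i - f| ≤ g d + max ell rr := by
    intro f hf1 hf2 d i hi
    have hx1 := abs_le.mp (h_xoL d i hi)
    have hx2 := abs_le.mp (h_xoR d i hi)
    rw [abs_sub_le_iff]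
    constructor
    · linarith [le_max_left ell rr]
    · linarith [le_max_right ell rr]
  have hsafe : ∀ d ∈ S, ∀ (f : ℝ), fL ≤ f → f ≤ fR → ∀ i, group i = d →
      |x i - f| ≤ g d + rr := by
    intro d hd f hf1 hf2 i hi
    obtain ⟨u, huc, hufL⟩ := hSprop d hd
    have hxr := hrmax d i hi
    have ha1 := abs_le.mp huc
    have hx2 := abs_le.mp (h_xoR d i hi)
    rw [abs_sub_le_iff]
    constructor
    · linarith [hcg d]
    · linarith
  -- per-group supremum bound
  have hsup : ∀ d : Fin k, (⨆ i : {i : Fin n // group i = d}, fcost (x i.1) (w1, w2)) ≤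
      g d + (if d ∈ S then rr else max ell rr) := by
    intro d
    haveI := hne d
    apply ciSup_le
    rintro ⟨i, hi⟩
    by_cases hd : d ∈ S <;> simp only [hd, if_true, if_false] <;>
      refine max_le ?_ ?_
    · exact hsafe d hd w1 hw1LR.1 hw1LR.2 i hi
    · exact hsafe d hd w2 hw2LR.1 hw2LR.2 i hi
    · exact hgen w1 hw1LR.1 hw1LR.2 d i hi
    · exact hgen w2 hw2LR.1 hw2LR.2 d i hi
  -- sum the per-group bounds
  set M : ℝ := max ell rr with hMdef
  have hMrr : rr ≤ M := le_max_right _ _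
  have hsum2 : ∑ d : Fin k, (⨆ i : {i : Fin n // group i = d}, fcost (x i.1) (w1, w2)) ≤
      ∑ d : Fin k, g d + ((k:ℝ) * M + (S.card : ℝ) * (rr - M)) := by
    have h1 := Finset.sum_le_sum (fun d (_ : d ∈ Finset.univ) => hsup d)
    rw [Finset.sum_add_distrib] at h1
    refine h1.trans (add_le_add_right (le_of_eq ?_) _)
    have hite : ∀ d : Fin k, (if d ∈ S then rr else M) = M + (if d ∈ S then rr - M else 0) := by
      intro d; split <;> ring
    rw [Finset.sum_congr rfl (fun d _ => hite d), Finset.sum_add_distrib, Finset.sum_const,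
      Finset.sum_ite_mem, Finset.univ_inter, Finset.sum_const, Finset.card_univ,
      Fintype.card_fin]
    simp [nsmul_eq_mul]
  have hSk : (S.card : ℝ) * (rr - M) ≤ (β * k) * (rr - M) := by
    apply mul_le_mul_of_nonpos_right _ (by linarith)
    exact le_trans hjge (by exact_mod_cast hScard)
  -- the constraint for the arithmetic lemma
  set T : ℝ := (∑ d : Fin k, c d) / k with hTdef
  have hcsum0 : 0 ≤ ∑ d : Fin k, c d := Finset.sum_nonneg (fun d _ => hc0 d)
  have hT0 : 0 ≤ T := div_nonneg hcsum0 hkR.le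
  have hTk : T * k = ∑ d : Fin k, c d := div_mul_cancel₀ _ hkR.ne'
  have hRk : (1 - β) * k ≤ (R.card : ℝ) := by
    have h1 : ((k + 1 - j : ℕ) : ℝ) ≤ (R.card : ℝ) := by exact_mod_cast hRcard
    have h2 : ((k + 1 - j : ℕ) : ℝ) = (k : ℝ) + 1 - j := by
      have : j ≤ k + 1 := by omega
      push_cast [Nat.cast_sub this]
      ring
    linarith
  have hcon : β * ell + (1 - β) * rr ≤ 2 * T := by
    have h1 : (β * k) * ell ≤ (S.card : ℝ) * ell :=
      mul_le_mul_of_nonneg_right (le_trans hjge (by exact_mod_cast hScard)) hell0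
    have h2 : ((1 - β) * k) * rr ≤ (R.card : ℝ) * rr :=
      mul_le_mul_of_nonneg_right hRk hrr0
    have h3 : (β * k) * ell + ((1 - β) * k) * rr ≤ 2 * (T * k) := by
      rw [hTk]; linarith
    have hgoal : (β * ell + (1 - β) * rr) * k ≤ (2 * T) * k := by
      have e1 : (β * ell + (1 - β) * rr) * k = (β * k) * ell + ((1 - β) * k) * rr := by ring
      have e2 : (2 * T) * k = 2 * (T * k) := by ring
      rw [e1, e2]
      exact h3
    exact le_of_mul_le_mul_right hgoal hkR
  have harith := arith_core β ell rr T hβ0 hβ1 hell0 hrr0 hT0 hcon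
  -- wrap up
  have hTG : T ≤ (∑ d : Fin k, g d) / k := by
    rw [hTdef]
    gcongr with d
    exact hcg d
  have hC0 : (0:ℝ) ≤ max (2 * (1 - β) / β) (2 / (1 - β)) := by
    exact le_trans (div_nonneg (by norm_num) (by linarith)) (le_max_right _ _)
  have hmax : max (1 + 2 * (1 - β) / β) (1 + 2 / (1 - β)) =
      1 + max (2 * (1 - β) / β) (2 / (1 - β)) := max_add_add_left 1 _ _
  have hgsum0 : 0 ≤ ∑ d : Fin k, g d := Finset.sum_nonneg (fun d _ => hg0 d)
  rw [hmax]
  have hfinal : (1 / (k:ℝ)) * ∑ d : Fin k,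
      (⨆ i : {i : Fin n // group i = d}, fcost (x i.1) (w1, w2)) ≤
      (1 / (k:ℝ)) * ∑ d : Fin k, g d + (β * rr + (1 - β) * M) := by
    have h1 : (1 / (k:ℝ)) * ∑ d : Fin k,
        (⨆ i : {i : Fin n // group i = d}, fcost (x i.1) (w1, w2)) ≤
        (1 / (k:ℝ)) * (∑ d : Fin k, g d + ((k:ℝ) * M + (S.card : ℝ) * (rr - M))) :=
      mul_le_mul_of_nonneg_left hsum2 (by positivity)
    refine h1.trans ?_
    have h2 : (k:ℝ) * M + (S.card : ℝ) * (rr - M) ≤ (k:ℝ) * (β * rr + (1 - β) * M) := by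
      nlinarith [hSk]
    have h3 : (1 / (k:ℝ)) * (∑ d : Fin k, g d + ((k:ℝ) * M + (S.card : ℝ) * (rr - M))) ≤
        (1 / (k:ℝ)) * (∑ d : Fin k, g d + (k:ℝ) * (β * rr + (1 - β) * M)) :=
      mul_le_mul_of_nonneg_left (by linarith) (by positivity)
    refine h3.trans (le_of_eq ?_)
    field_simp
  refine hfinal.trans ?_
  have h4 : β * rr + (1 - β) * M ≤ max (2 * (1 - β) / β) (2 / (1 - β)) * ((1 / (k:ℝ)) * ∑ d : Fin k, g d) := by
    refine harith.trans ?_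
    have : T ≤ (1 / (k:ℝ)) * ∑ d : Fin k, g d := by
      rw [one_div, inv_mul_eq_div]
      exact hTG
    exact mul_le_mul_of_nonneg_left this hC0
  linarith [h4]

end
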